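/- Let Γ be the set of stable matchings of a stable marriage instance with men A and women B and strict preference lists. If X and Y are stable matchings, then the matchings X ⊔ Y (matching each man a to his more preferred of his partners in X and Y) and X ⊓ Y (matching each man to his less preferred partner) are both well-defined perfect matchings and are stable. -/
import Mathlib


/-- A stable-marriage instance on `K_{n,n}`: each man (resp. woman) ranks the
women (resp. men) by a strict linear order given by an injective rank function
(lower rank = more preferred). -/
structure SMInstance (n : ℕ) where
  mRank : Fin n → Fin n → Fin n
  wRank : Fin n → Fin n → Fin n
  mInj : ∀ a, Function.Injective (mRank a)
  wInj : ∀ b, Function.Injective (wRank b)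

/-- A perfect matching (bijection men → women) is stable if there is no
blocking pair. -/
def SMInstance.IsStable {n : ℕ} (I : SMInstance n) (M : Fin n ≃ Fin n) : Prop :=
  ¬ ∃ a b : Fin n, M a ≠ b ∧ I.mRank a b < I.mRank a (M a) ∧
    I.wRank b a < I.wRank b (M.symm b)

/-- Auxiliary: two men cannot share a woman as the preferred of their partners. -/
lemma sm_aux {n : ℕ} (I : SMInstance n) (X Y : Fin n ≃ Fin n)
    (hX : I.IsStable X) (hY : I.IsStable Y) (a a' : Fin n) (hne : a ≠ a')
    (hb : X a = Y a') (h1 : I.mRank a (X a) < I.mRank a (Y a))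
    (h2 : I.mRank a' (Y a') < I.mRank a' (X a')) : False := by
  set b := X a with hbdef
  have hYsymm : Y.symm b = a' := by rw [hb, Y.symm_apply_apply]
  have hXsymm : X.symm b = a := X.symm_apply_apply a
  -- stability of Y: b cannot prefer a to a'
  have hnotY : ¬ (I.wRank b a < I.wRank b a') := by
    intro hlt
    apply hY
    refine ⟨a, b, ?_, ?_, ?_⟩
    · intro h; rw [h] at h1; exact lt_irrefl _ h1
    · exact h1
    · rw [hYsymm]; exact hlt
  have hwa : I.wRank b a' < I.wRank b a := by
    rcases lt_trichotomy (I.wRank b a') (I.wRank b a) with h | h | h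
    · exact h
    · exact absurd (I.wInj b h.symm) hne
    · exact absurd h hnotY
  -- (a', b) blocks X
  apply hX
  refine ⟨a', b, ?_, ?_, ?_⟩
  · intro h; rw [h, ← hb] at h2; exact lt_irrefl _ h2
  · rw [← hb] at h2; exact h2
  · rw [hXsymm]; exact hwa

theorem stable_matchings_lattice_ops {n : ℕ} (I : SMInstance n)
    (X Y : Fin n ≃ Fin n) (hX : I.IsStable X) (hY : I.IsStable Y) :
    (∃ J : Fin n ≃ Fin n,
      (∀ a : Fin n,
        J a = if I.mRank a (X a) ≤ I.mRank a (Y a) then X a else Y a) ∧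
      I.IsStable J) ∧
    (∃ K : Fin n ≃ Fin n,
      (∀ a : Fin n,
        K a = if I.mRank a (X a) ≤ I.mRank a (Y a) then Y a else X a) ∧
      I.IsStable K) := by
  classical
  set f : Fin n → Fin n :=
    fun a => if I.mRank a (X a) ≤ I.mRank a (Y a) then X a else Y a with hf
  set g : Fin n → Fin n :=
    fun a => if I.mRank a (X a) ≤ I.mRank a (Y a) then Y a else X a with hg
  have hmem : ∀ a, (f a = X a ∧ g a = Y a) ∨ (f a = Y a ∧ g a = X a) := by
    intro a
    by_cases h : I.mRank a (X a) ≤ I.mRank a (Y a)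
    · left; constructor <;> simp [hf, hg, h]
    · right; constructor <;> simp [hf, hg, h]
  have hfle : ∀ a, I.mRank a (f a) ≤ I.mRank a (X a) ∧
      I.mRank a (f a) ≤ I.mRank a (Y a) := by
    intro a
    by_cases h : I.mRank a (X a) ≤ I.mRank a (Y a)
    · simp only [hf, if_pos h]; exact ⟨le_refl _, h⟩
    · simp only [hf, if_neg h]; exact ⟨le_of_not_ge h, le_refl _⟩
  have hgle : ∀ a, I.mRank a (X a) ≤ I.mRank a (g a) ∧
      I.mRank a (Y a) ≤ I.mRank a (g a) := by
    intro a
    by_cases h : I.mRank a (X a) ≤ I.mRank a (Y a)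
    · simp only [hg, if_pos h]; exact ⟨h, le_refl _⟩
    · simp only [hg, if_neg h]; exact ⟨le_refl _, le_of_not_ge h⟩
  -- strictness helper
  have hstrict : ∀ a (u v : Fin n), I.mRank a u ≤ I.mRank a v → u ≠ v →
      I.mRank a u < I.mRank a v := by
    intro a u v h hne
    exact lt_of_le_of_ne h (fun e => hne (I.mInj a e))
  -- f is injective
  have hfinj : Function.Injective f := by
    intro a a' h
    by_contra hne
    rcases hmem a with ⟨ha1, _⟩ | ⟨ha1, _⟩ <;> rcases hmem a' with ⟨ha2, _⟩ | ⟨ha2, _⟩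
    · exact hne (X.injective (by rw [← ha1, ← ha2, h]))
    · -- f a = X a, f a' = Y a', so X a = Y a'
      have hb : X a = Y a' := by rw [← ha1, ← ha2, h]
      have h1 : I.mRank a (X a) < I.mRank a (Y a) := by
        refine hstrict a (X a) (Y a) (ha1 ▸ (hfle a).2) ?_
        intro e
        exact hne (Y.injective (by rw [← e, hb]))
      have h2 : I.mRank a' (Y a') < I.mRank a' (X a') := by
        refine hstrict a' (Y a') (X a') (ha2 ▸ (hfle a').1) ?_
        intro e
        exact hne (X.injective (by rw [hb, e]))
      exact sm_aux I X Y hX hY a a' hne hb h1 h2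
    · -- f a = Y a, f a' = X a', so Y a = X a'
      have hb : Y a = X a' := by rw [← ha1, ← ha2, h]
      have h1 : I.mRank a (Y a) < I.mRank a (X a) := by
        refine hstrict a (Y a) (X a) (ha1 ▸ (hfle a).1) ?_
        intro e
        exact hne (X.injective (by rw [← e, hb]))
      have h2 : I.mRank a' (X a') < I.mRank a' (Y a') := by
        refine hstrict a' (X a') (Y a') (ha2 ▸ (hfle a').2) ?_
        intro e
        exact hne (Y.injective (by rw [hb, e]))
      exact sm_aux I Y X hY hX a a' hne hb h1 h2
    · exact hne (Y.injective (by rw [← ha1, ← ha2, h]))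
  have hfbij : Function.Bijective f := Finite.injective_iff_bijective.mp hfinj
  -- g is injective, using surjectivity of f
  have hginj : Function.Injective g := by
    intro a a' h
    by_contra hne
    rcases hmem a with ⟨hfa, hga⟩ | ⟨hfa, hga⟩ <;>
      rcases hmem a' with ⟨hfa', hga'⟩ | ⟨hfa', hga'⟩
    · exact hne (Y.injective (by rw [← hga, ← hga', h]))
    · -- g a = Y a, g a' = X a', b := Y a = X a'
      have hb : Y a = X a' := by rw [← hga, ← hga', h]
      obtain ⟨c, hc⟩ := hfbij.surjective (Y a)
      rcases hmem c with ⟨hfc, _⟩ | ⟨hfc, _⟩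
      · -- f c = X c = Y a = X a', so c = a', but f a' = Y a'
        have hca' : c = a' := X.injective (by rw [← hfc, hc, hb])
        rw [hca', hfa'] at hc
        exact hne (Y.injective hc.symm)
      · -- f c = Y c = Y a, so c = a, but f a = X a
        have hca : c = a := Y.injective (by rw [← hfc, hc])
        rw [hca, hfa] at hc
        -- X a = Y a, and Y a = X a', so X a = X a'
        exact hne (X.injective (by rw [hc, hb]))
    · have hb : X a = Y a' := by rw [← hga, ← hga', h]
      obtain ⟨c, hc⟩ := hfbij.surjective (X a)
      rcases hmem c with ⟨hfc, _⟩ | ⟨hfc, _⟩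
      · have hca : c = a := X.injective (by rw [← hfc, hc])
        rw [hca, hfa] at hc
        exact hne (Y.injective (hc.trans hb))
      · have hca' : c = a' := Y.injective (by rw [← hfc, hc, hb])
        rw [hca', hfa'] at hc
        exact hne (X.injective hc.symm)
    · exact hne (X.injective (by rw [← hga, ← hga', h]))
  have hgbij : Function.Bijective g := Finite.injective_iff_bijective.mp hginj
  set J : Fin n ≃ Fin n := Equiv.ofBijective f hfbij with hJ
  set K : Fin n ≃ Fin n := Equiv.ofBijective g hgbij with hK
  have hJa : ∀ a, J a = f a := fun a => rfl
  have hKa : ∀ a, K a = g a := fun a => rfl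
  -- stability of J
  have hJstable : I.IsStable J := by
    rintro ⟨a, b, hne, hm, hw⟩
    set a' := J.symm b with ha'
    have hJa' : f a' = b := J.apply_symm_apply b
    rw [hJa] at hm hne
    rcases hmem a' with ⟨hfa', _⟩ | ⟨hfa', _⟩
    · -- X a' = b : (a, b) blocks X
      have hXb : X a' = b := by rw [← hfa', hJa']
      apply hX
      refine ⟨a, b, ?_, ?_, ?_⟩
      · intro h
        have : a = a' := X.injective (by rw [h, hXb])
        apply hne; rw [this, hfa', hXb]
      · exact lt_of_lt_of_le hm (hfle a).1
      · rw [show X.symm b = a' from by rw [← hXb, X.symm_apply_apply]]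
        exact hw
    · have hYb : Y a' = b := by rw [← hfa', hJa']
      apply hY
      refine ⟨a, b, ?_, ?_, ?_⟩
      · intro h
        have : a = a' := Y.injective (by rw [h, hYb])
        apply hne; rw [this, hfa', hYb]
      · exact lt_of_lt_of_le hm (hfle a).2
      · rw [show Y.symm b = a' from by rw [← hYb, Y.symm_apply_apply]]
        exact hw
  -- each woman prefers her K-partner to both her X- and Y-partners
  have hwpref : ∀ b, I.wRank b (K.symm b) ≤ I.wRank b (X.symm b) ∧
      I.wRank b (K.symm b) ≤ I.wRank b (Y.symm b) := by
    intro b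
    set c := K.symm b with hcdef
    have hgc : g c = b := K.apply_symm_apply b
    rcases hmem c with ⟨hfc, hgc'⟩ | ⟨hfc, hgc'⟩
    · -- g c = Y c = b
      have hYc : Y c = b := by rw [← hgc', hgc]
      have hYsymm : Y.symm b = c := by rw [← hYc, Y.symm_apply_apply]
      refine ⟨?_, by rw [hYsymm]⟩
      set p := X.symm b with hpdef
      have hXp : X p = b := X.apply_symm_apply b
      by_cases hpc : p = c
      · rw [hpc]
      · by_contra hlt
        push_neg at hlt
        -- from g p ≠ b : f p = X p = b, so p prefers b strictly to Y p
        have hgp : g p ≠ b := by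
          intro h
          exact hpc (hginj (by rw [h, hgc]))
        have hfp : f p = X p := by
          rcases hmem p with ⟨h1, _⟩ | ⟨_, h2⟩
          · exact h1
          · exact absurd (h2.symm ▸ hXp : g p = b) hgp
        have hYp : Y p ≠ b := by
          intro h
          exact hpc (Y.injective (by rw [h, hYc]))
        have hmp : I.mRank p b < I.mRank p (Y p) := by
          have := (hfle p).2
          rw [hfp, hXp] at this
          exact hstrict p b (Y p) this (fun e => hYp e.symm)
        apply hY
        exact ⟨p, b, fun h => hYp h, hmp, by rw [hYsymm]; exact hlt⟩
    · -- g c = X c = b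
      have hXc : X c = b := by rw [← hgc', hgc]
      have hXsymm : X.symm b = c := by rw [← hXc, X.symm_apply_apply]
      refine ⟨by rw [hXsymm], ?_⟩
      set p := Y.symm b with hpdef
      have hYp : Y p = b := Y.apply_symm_apply b
      by_cases hpc : p = c
      · rw [hpc]
      · by_contra hlt
        push_neg at hlt
        have hgp : g p ≠ b := by
          intro h
          exact hpc (hginj (by rw [h, hgc]))
        have hfp : f p = Y p := by
          rcases hmem p with ⟨_, h2⟩ | ⟨h1, _⟩
          · exact absurd (h2.symm ▸ hYp : g p = b) hgp
          · exact h1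
        have hXpne : X p ≠ b := by
          intro h
          exact hpc (X.injective (by rw [h, hXc]))
        have hmp : I.mRank p b < I.mRank p (X p) := by
          have := (hfle p).1
          rw [hfp, hYp] at this
          exact hstrict p b (X p) this (fun e => hXpne e.symm)
        apply hX
        exact ⟨p, b, fun h => hXpne h, hmp, by rw [hXsymm]; exact hlt⟩
  -- stability of K
  have hKstable : I.IsStable K := by
    rintro ⟨a, b, hne, hm, hw⟩
    rw [hKa] at hm hne
    rcases hmem a with ⟨_, hga⟩ | ⟨_, hga⟩
    · -- g a = Y a : (a, b) blocks Y
      rw [hga] at hm hne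
      apply hY
      refine ⟨a, b, hne, hm, ?_⟩
      exact lt_of_lt_of_le hw (hwpref b).2
    · rw [hga] at hm hne
      apply hX
      refine ⟨a, b, hne, hm, ?_⟩
      exact lt_of_lt_of_le hw (hwpref b).1
  refine ⟨⟨J, fun a => rfl, hJstable⟩, ⟨K, fun a => rfl, hKstable⟩⟩
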